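/- Let H be a complex Hilbert space and let M_A and M_B be von Neumann algebras on H that commute (a * b = b * a for all a ∈ M_A, b ∈ M_B) and have the Uhlmann property. If Ψ, Φ ∈ H satisfy ⟪Ψ, a Ψ⟫ = ⟪Φ, a Φ⟫ for all a ∈ M_A, then there exists a partial isometry v ∈ M_B (i.e. v * (adjoint v) * v = v) with v Ψ = Φ. -/

import Mathlib

open scoped InnerProductSpace

/-- The pair `(M_A, M_B)` of von Neumann algebras has the *Uhlmann property* if any two
unit vectors inducing the same state on `M_A` can be mapped onto each other, up to
arbitrarily small error, by unitaries of `M_B`. -/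
def UhlmannProperty {H : Type*} [NormedAddCommGroup H] [InnerProductSpace ℂ H]
    [CompleteSpace H] (M_A M_B : VonNeumannAlgebra H) : Prop :=
  ∀ Ψ Φ : H, ‖Ψ‖ = 1 → ‖Φ‖ = 1 →
    (∀ a ∈ M_A, ⟪Ψ, a Ψ⟫_ℂ = ⟪Φ, a Φ⟫_ℂ) →
    ∀ ε : ℝ, 0 < ε →
      ∃ u ∈ M_B, star u * u = 1 ∧ u * star u = 1 ∧ ‖⟪Ψ, u Φ⟫_ℂ‖ ≥ 1 - ε


open ContinuousLinearMap Topology in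
lemma uhlmann_approx_bound {H : Type*} [NormedAddCommGroup H] [InnerProductSpace ℂ H] [CompleteSpace H]
    (M_B : VonNeumannAlgebra H) (c u : H →L[ℂ] H)
    (hc : c ∈ M_B.commutant) (huB : u ∈ M_B)
    (hu1 : star u * u = 1) (Ψ' Φ' : H) (hnΨ' : ‖Ψ'‖ = 1) (hnΦ' : ‖Φ'‖ = 1)
    (ε : ℝ) (hε : 0 < ε) (hε1 : ε < 1)
    (hz : ‖⟪Ψ', u Φ'⟫_ℂ‖ ≥ 1 - ε) :
    ‖⟪Φ', c Φ'⟫_ℂ - ⟪Ψ', c Ψ'⟫_ℂ‖ ≤ 2*(‖c‖+1) * Real.sqrt (2*ε) := by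
  set z := ⟪Ψ', u Φ'⟫_ℂ with hzdef
  have hz0 : (0:ℝ) < ‖z‖ := lt_of_lt_of_le (by linarith) hz
  set l : ℂ := (‖z‖:ℂ)⁻¹ * z with hldef
  have hzcne : (‖z‖:ℂ) ≠ 0 := by exact_mod_cast hz0.ne'
  have hlnorm : ‖l‖ = 1 := by
    rw [hldef, norm_mul, norm_inv, Complex.norm_real, Real.norm_eq_abs,
      abs_of_nonneg hz0.le]
    exact inv_mul_cancel₀ hz0.ne'
  set x : H := l • Ψ' with hxdef
  set y : H := u Φ' with hydef
  have hcu : c * u = u * c := (VonNeumannAlgebra.mem_commutant_iff.mp hc u huB).symm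
  have hyy : ⟪y, y⟫_ℂ = ⟪Φ', Φ'⟫_ℂ := by
    calc ⟪u Φ', u Φ'⟫_ℂ = ⟪Φ', (adjoint u) (u Φ')⟫_ℂ := (adjoint_inner_right u Φ' (u Φ')).symm
      _ = ⟪Φ', (star u * u) Φ'⟫_ℂ := by rw [star_eq_adjoint]; rfl
      _ = ⟪Φ', Φ'⟫_ℂ := by rw [hu1]; simp
  have hy1 : ‖y‖ = 1 := by
    have h3 : ‖y‖^2 = ‖Φ'‖^2 := by
      rw [← @inner_self_eq_norm_sq ℂ, ← @inner_self_eq_norm_sq ℂ, hyy]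
    nlinarith [norm_nonneg y, norm_nonneg Φ']
  have hx1 : ‖x‖ = 1 := by rw [hxdef, norm_smul, hlnorm, hnΨ', one_mul]
  have hll : (starRingEnd ℂ) l * l = 1 := by
    rw [RCLike.conj_mul, hlnorm]; simp
  have hxy : ⟪x, y⟫_ℂ = (‖z‖:ℂ) := by
    rw [hxdef, inner_smul_left, ← hzdef, hldef, map_mul, map_inv₀, Complex.conj_ofReal,
      mul_assoc, RCLike.conj_mul, sq]
    field_simp
    rfl
  have hsub : ‖y - x‖^2 ≤ 2*ε := by
    have hns := @norm_sub_sq ℂ _ _ _ _ y x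
    have hrexy : RCLike.re ⟪y, x⟫_ℂ = ‖z‖ := by
      rw [← inner_conj_symm, hxy]; simp
    rw [hrexy, hy1, hx1] at hns
    rw [hns]; linarith
  have hsub' : ‖y - x‖ ≤ Real.sqrt (2*ε) := by
    rw [← Real.sqrt_sq (norm_nonneg (y-x))]
    exact Real.sqrt_le_sqrt hsub
  have hB : ⟪Φ', c Φ'⟫_ℂ = ⟪y, c y⟫_ℂ := by
    have h2 : star u * (c * u) = c := by
      rw [hcu, ← mul_assoc, hu1, one_mul]
    calc ⟪Φ', c Φ'⟫_ℂ = ⟪Φ', (star u * (c * u)) Φ'⟫_ℂ := by rw [h2]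
      _ = ⟪Φ', (adjoint u) (c (u Φ'))⟫_ℂ := by rw [star_eq_adjoint]; rfl
      _ = ⟪u Φ', c (u Φ')⟫_ℂ := adjoint_inner_right u Φ' _
  have hA : ⟪Ψ', c Ψ'⟫_ℂ = ⟪x, c x⟫_ℂ := by
    rw [hxdef, map_smul, inner_smul_left, inner_smul_right, ← mul_assoc, hll, one_mul]
  have hdiff : ⟪y, c y⟫_ℂ - ⟪x, c x⟫_ℂ = ⟪y - x, c y⟫_ℂ + ⟪x, c (y-x)⟫_ℂ := by
    rw [inner_sub_left, map_sub, inner_sub_right]; ring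
  calc ‖⟪Φ', c Φ'⟫_ℂ - ⟪Ψ', c Ψ'⟫_ℂ‖ = ‖⟪y - x, c y⟫_ℂ + ⟪x, c (y-x)⟫_ℂ‖ := by
        rw [hB, hA, hdiff]
    _ ≤ ‖⟪y - x, c y⟫_ℂ‖ + ‖⟪x, c (y-x)⟫_ℂ‖ := norm_add_le _ _
    _ ≤ ‖y - x‖ * ‖c y‖ + ‖x‖ * ‖c (y-x)‖ :=
        add_le_add (norm_inner_le_norm _ _) (norm_inner_le_norm _ _)
    _ ≤ ‖y - x‖ * (‖c‖ * ‖y‖) + ‖x‖ * (‖c‖ * ‖y - x‖) :=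
        add_le_add (mul_le_mul_of_nonneg_left (c.le_opNorm y) (norm_nonneg _))
          (mul_le_mul_of_nonneg_left (c.le_opNorm (y-x)) (norm_nonneg _))
    _ ≤ 2*(‖c‖+1) * Real.sqrt (2*ε) := by
        rw [hy1, hx1]
        nlinarith [hsub', norm_nonneg (y-x), opNorm_nonneg c, Real.sqrt_nonneg (2*ε), norm_nonneg c]

open ContinuousLinearMap Topology in
lemma state_eq_commutant {H : Type*} [NormedAddCommGroup H] [InnerProductSpace ℂ H]
    [CompleteSpace H] (M_A M_B : VonNeumannAlgebra H)
    (huhlmann : UhlmannProperty M_A M_B)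
    (Ψ Φ : H) (hmarg : ∀ a ∈ M_A, ⟪Ψ, a Ψ⟫_ℂ = ⟪Φ, a Φ⟫_ℂ) :
    ∀ c ∈ M_B.commutant, ⟪Ψ, c Ψ⟫_ℂ = ⟪Φ, c Φ⟫_ℂ := by
  intro c hc
  have hnn : (‖Ψ‖:ℂ)^2 = (‖Φ‖:ℂ)^2 := by
    have := hmarg 1 (one_mem M_A)
    simpa [inner_self_eq_norm_sq_to_K] using this
  have hnorm : ‖Ψ‖ = ‖Φ‖ := by
    have h2 : ‖Ψ‖^2 = ‖Φ‖^2 := by exact_mod_cast hnn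
    nlinarith [norm_nonneg Ψ, norm_nonneg Φ]
  rcases eq_or_lt_of_le (norm_nonneg Ψ) with h0 | ht
  · have hΨ : Ψ = 0 := by simpa using h0.symm
    have hΦ : Φ = 0 := by
      have : ‖Φ‖ = 0 := by rw [← hnorm, ← h0]
      simpa using this
    simp [hΨ, hΦ]
  · set t : ℝ := ‖Ψ‖ with htdef
    set Ψ' : H := (t:ℂ)⁻¹ • Ψ with hΨ'def
    set Φ' : H := (t:ℂ)⁻¹ • Φ with hΦ'def
    have htne : (t:ℂ) ≠ 0 := by exact_mod_cast ht.ne'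
    have hnΨ' : ‖Ψ'‖ = 1 := by
      rw [hΨ'def, norm_smul]
      simp [htdef]
      field_simp
      exact div_self ht.ne'
    have hnΦ' : ‖Φ'‖ = 1 := by
      rw [hΦ'def, norm_smul, ← hnorm]
      simp [htdef]
      field_simp
      exact div_self ht.ne'
    have hsc : ∀ (a : H →L[ℂ] H) (x y : H),
        ⟪(t:ℂ)⁻¹ • x, a ((t:ℂ)⁻¹ • y)⟫_ℂ
          = (starRingEnd ℂ) (t:ℂ)⁻¹ * ((t:ℂ)⁻¹ * ⟪x, a y⟫_ℂ) := by
      intro a x y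
      rw [map_smul, inner_smul_left, inner_smul_right]
    have hmarg' : ∀ a ∈ M_A, ⟪Ψ', a Ψ'⟫_ℂ = ⟪Φ', a Φ'⟫_ℂ := by
      intro a ha
      rw [hΨ'def, hΦ'def, hsc, hsc, hmarg a ha]
    -- main approximation claim
    have key : ⟪Ψ', c Ψ'⟫_ℂ = ⟪Φ', c Φ'⟫_ℂ := by
      have happrox : ∀ ε : ℝ, 0 < ε → ε < 1 →
          ‖⟪Φ', c Φ'⟫_ℂ - ⟪Ψ', c Ψ'⟫_ℂ‖ ≤ 2*(‖c‖+1) * Real.sqrt (2*ε) := by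
        intro ε hε hε1
        obtain ⟨u, huB, hu1, hu2, hz⟩ := huhlmann Ψ' Φ' hnΨ' hnΦ' hmarg' ε hε
        exact uhlmann_approx_bound M_B c u hc huB hu1 Ψ' Φ' hnΨ' hnΦ' ε hε hε1 hz
      by_contra hne
      set d := ‖⟪Φ', c Φ'⟫_ℂ - ⟪Ψ', c Ψ'⟫_ℂ‖ with hddef
      have hd0 : 0 < d := by
        rw [hddef, norm_pos_iff, sub_ne_zero]
        exact fun h => hne h.symm
      set K := 2*(‖c‖+1) with hK
      have hK0 : 0 < K := by positivity
      set ε := min (1/2) (d^2/(4*(K^2+1))) with hεd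
      have hε0 : 0 < ε := by positivity
      have hε1 : ε < 1 := lt_of_le_of_lt (min_le_left _ _) (by norm_num)
      have hb := happrox ε hε0 hε1
      have hsq : d^2 ≤ K^2 * (2*ε) := by
        have h1 : d^2 ≤ (K * Real.sqrt (2*ε))^2 := by
          apply pow_le_pow_left₀ hd0.le hb
        rwa [mul_pow, Real.sq_sqrt (by positivity)] at h1
      have hεle : ε ≤ d^2/(4*(K^2+1)) := min_le_right _ _
      rw [le_div_iff₀ (by positivity)] at hεle
      nlinarith [hsq, hεle, hε0, mul_nonneg hε0.le (sq_nonneg K)]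
    have h1 : (starRingEnd ℂ) (t:ℂ)⁻¹ ≠ 0 := by
      simp [htne]
    have := key
    rw [hΨ'def, hΦ'def, hsc, hsc] at this
    exact mul_left_cancel₀ (inv_ne_zero htne) (mul_left_cancel₀ h1 this)

open ContinuousLinearMap Topology in
lemma exists_pi_of_state_eq {H : Type*} [NormedAddCommGroup H] [InnerProductSpace ℂ H]
    [CompleteSpace H] (N : VonNeumannAlgebra H) (Ψ Φ : H)
    (hN : ∀ c ∈ N, ⟪Ψ, c Ψ⟫_ℂ = ⟪Φ, c Φ⟫_ℂ) :
    ∃ v ∈ N.commutant, v * (ContinuousLinearMap.adjoint v) * v = v ∧ v Ψ = Φ := by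
  have hnorm : ∀ c : H →L[ℂ] H, c ∈ N → ‖c Ψ‖ = ‖c Φ‖ := by
    intro c hc
    have h1 : ⟪c Ψ, c Ψ⟫_ℂ = ⟪c Φ, c Φ⟫_ℂ := by
      have h2 := hN (star c * c) (mul_mem (star_mem hc) hc)
      have e1 : ⟪Ψ, (star c * c) Ψ⟫_ℂ = ⟪c Ψ, c Ψ⟫_ℂ := by
        rw [star_eq_adjoint]
        exact adjoint_inner_right c Ψ (c Ψ)
      have e2 : ⟪Φ, (star c * c) Φ⟫_ℂ = ⟪c Φ, c Φ⟫_ℂ := by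
        rw [star_eq_adjoint]
        exact adjoint_inner_right c Φ (c Φ)
      rw [← e1, ← e2]; exact h2
    have h3 : ‖c Ψ‖^2 = ‖c Φ‖^2 := by
      rw [← @inner_self_eq_norm_sq ℂ, ← @inner_self_eq_norm_sq ℂ, h1]
    nlinarith [norm_nonneg (c Ψ), norm_nonneg (c Φ)]
  classical
  set SN : Submodule ℂ (H →L[ℂ] H) :=
    Subalgebra.toSubmodule N.toStarSubalgebra.toSubalgebra with hSN
  have hmemSN : ∀ c : H →L[ℂ] H, c ∈ SN ↔ c ∈ N := fun c => Iff.rfl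
  let jΨ : (H →L[ℂ] H) →ₗ[ℂ] H :=
    { toFun := fun A => A Ψ, map_add' := fun _ _ => rfl, map_smul' := fun _ _ => rfl }
  let jΦ : (H →L[ℂ] H) →ₗ[ℂ] H :=
    { toFun := fun A => A Φ, map_add' := fun _ _ => rfl, map_smul' := fun _ _ => rfl }
  let fψ : SN →ₗ[ℂ] H := jΨ ∘ₗ SN.subtype
  let g : SN →ₗ[ℂ] H := jΦ ∘ₗ SN.subtype
  have hfψ : ∀ d : SN, fψ d = (d : H →L[ℂ] H) Ψ := fun d => rfl
  have hg : ∀ d : SN, g d = (d : H →L[ℂ] H) Φ := fun d => rfl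
  set W : Submodule ℂ H := LinearMap.range fψ with hW
  have hker : LinearMap.ker fψ ≤ LinearMap.ker g := by
    intro d hd
    rw [LinearMap.mem_ker] at hd ⊢
    have := hnorm (d : H →L[ℂ] H) d.2
    rw [← hfψ, ← hg, hd] at this
    simpa using this.symm
  set T₀ : W →ₗ[ℂ] H :=
    ((LinearMap.ker fψ).liftQ g hker) ∘ₗ (fψ.quotKerEquivRange).symm.toLinearMap with hT₀def
  have hT₀ : ∀ d : SN, ∀ h, T₀ ⟨fψ d, h⟩ = g d := by
    intro d h
    have h1 : (fψ.quotKerEquivRange).symm ⟨fψ d, h⟩ = Submodule.Quotient.mk d := by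
      rw [LinearEquiv.symm_apply_eq]
      exact Subtype.ext (fψ.quotKerEquivRange_apply_mk d).symm
    show ((LinearMap.ker fψ).liftQ g hker) ((fψ.quotKerEquivRange).symm ⟨fψ d, h⟩) = g d
    rw [h1]
    exact Submodule.liftQ_apply _ g d
  have hT₀norm : ∀ w : W, ‖T₀ w‖ = ‖w‖ := by
    rintro ⟨w, hw⟩
    obtain ⟨d, rfl⟩ := hw
    refine (congrArg norm (hT₀ d _)).trans ?_
    show ‖g d‖ = ‖fψ d‖
    rw [hfψ, hg]
    exact (hnorm _ d.2).symm
  -- closure and extension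
  let Ti : W →ₗᵢ[ℂ] H := ⟨T₀, hT₀norm⟩
  set S : Submodule ℂ H := W.topologicalClosure with hSdef
  have hSclosed : IsClosed (S : Set H) := W.isClosed_topologicalClosure
  haveI : CompleteSpace S := hSclosed.completeSpace_coe
  let e : W →L[ℂ] S :=
    { toLinearMap := Submodule.inclusion W.le_topologicalClosure,
      cont := Continuous.subtype_mk continuous_subtype_val _ }
  have he_norm : ∀ w : W, ‖e w‖ = ‖w‖ := fun w => rfl
  have he_isom : Isometry e := AddMonoidHomClass.isometry_of_norm e he_norm
  have hdense : DenseRange e := by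
    refine IsInducing.subtypeVal.dense_iff.2 fun x => ?_
    have hx : (x : H) ∈ closure (W : Set H) := by
      have := x.2
      rwa [← W.topologicalClosure_coe]
    convert hx using 2
    rw [← Set.range_comp]
    ext y
    constructor
    · rintro ⟨w, rfl⟩
      exact w.2
    · intro hy
      exact ⟨⟨y, hy⟩, rfl⟩
  let T : S →L[ℂ] H :=
    ContinuousLinearMap.extend Ti.toContinuousLinearMap e
  have hTe : ∀ w : W, T (e w) = T₀ w := fun w =>
    ContinuousLinearMap.extend_eq (e := e) _ hdense he_isom.isUniformInducing w
  have hTnorm : ∀ s : S, ‖T s‖ = ‖s‖ := by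
    intro s
    refine hdense.induction_on s
      (isClosed_eq T.continuous.norm continuous_subtype_val.norm) (fun w => ?_)
    rw [hTe w, he_norm w]
    exact hT₀norm w
  let TI : S →ₗᵢ[ℂ] H := ⟨(T : S →ₗ[ℂ] H), hTnorm⟩
  have hTinner : ∀ s s' : S, ⟪T s, T s'⟫_ℂ = ⟪(s:H), (s':H)⟫_ℂ := by
    intro s s'
    exact TI.inner_map_map s s'
  set P := S.orthogonalProjectionOnto with hPdef
  let v : H →L[ℂ] H := T ∘L (P : H →L[ℂ] S)
  have hv : ∀ x : H, v x = T (P x) := fun _ => rfl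
  have hPs : ∀ s : S, P (s : H) = s := fun s => Submodule.orthogonalProjectionOnto_mem_subspace_eq_self s
  have hvs : ∀ s : S, v (s:H) = T s := by
    intro s
    rw [hv, hPs]
  -- v Ψ = Φ
  have h1m : (1 : H →L[ℂ] H) ∈ SN := (hmemSN 1).2 (one_mem N)
  have hΨW : Ψ ∈ W := ⟨⟨1, h1m⟩, rfl⟩
  have hvΨ : v Ψ = Φ := by
    have h2 : v Ψ = T ⟨Ψ, W.le_topologicalClosure hΨW⟩ := hvs ⟨Ψ, W.le_topologicalClosure hΨW⟩
    rw [h2]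
    have h3 : (⟨Ψ, W.le_topologicalClosure hΨW⟩ : S) = e ⟨Ψ, hΨW⟩ := rfl
    rw [h3, hTe]
    exact hT₀ ⟨1, h1m⟩ hΨW
  -- invariance lemmas
  have hWc : ∀ (c : H →L[ℂ] H), c ∈ N → ∀ x ∈ W, c x ∈ W := by
    rintro c hc x ⟨d, rfl⟩
    exact ⟨⟨c * (d : H →L[ℂ] H), (hmemSN _).2 (mul_mem hc ((hmemSN _).1 d.2))⟩, rfl⟩
  have hSc : ∀ (c : H →L[ℂ] H), c ∈ N → ∀ x ∈ S, c x ∈ S := by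
    intro c hc x hx
    have h2 : Set.MapsTo c (W : Set H) (W : Set H) := fun y hy => hWc c hc y hy
    have h3 := h2.closure c.continuous
    have hx' : x ∈ closure (W : Set H) := by rwa [← W.topologicalClosure_coe]
    have := h3 hx'
    rwa [← SetLike.mem_coe, W.topologicalClosure_coe]
  have hSperp : ∀ (c : H →L[ℂ] H), c ∈ N → ∀ x ∈ Sᗮ, c x ∈ Sᗮ := by
    intro c hc x hx
    rw [Submodule.mem_orthogonal]
    intro s hs
    rw [← adjoint_inner_left]
    have hstar : (adjoint c) s ∈ S := by
      have : star c ∈ N := star_mem hc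
      rw [← star_eq_adjoint]
      exact hSc _ this s hs
    exact (Submodule.mem_orthogonal S x).1 hx _ hstar
  -- T commutes with elements of N on S
  have hTc : ∀ (c : H →L[ℂ] H) (hc : c ∈ N) (s : S),
      T ⟨c (s:H), hSc c hc _ s.2⟩ = c (T s) := by
    intro c hc s
    refine hdense.induction_on s (isClosed_eq
      (T.continuous.comp (Continuous.subtype_mk (c.continuous.comp continuous_subtype_val) _))
      (c.continuous.comp T.continuous)) (fun w => ?_)
    obtain ⟨d, hd⟩ := w.2
    have hmemw : c ((w : W) : H) ∈ W := hWc c hc _ w.2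
    have h1 : (⟨c ((e w : S) : H), hSc c hc _ (e w).2⟩ : S) = e ⟨c ((w:W):H), hmemw⟩ := rfl
    rw [h1, hTe, hTe]
    set dd : SN := ⟨c * (d : H →L[ℂ] H), (hmemSN _).2 (mul_mem hc ((hmemSN _).1 d.2))⟩ with hdd
    have h2 : (⟨c ((w:W):H), hmemw⟩ : W) = ⟨fψ dd, LinearMap.mem_range_self _ dd⟩ := by
      apply Subtype.ext
      show c ((w:W):H) = (c * (d : H →L[ℂ] H)) Ψ
      rw [ContinuousLinearMap.mul_apply]
      congr 1
      exact hd.symm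
    rw [h2, hT₀ dd]
    have h3 : (w : W) = ⟨fψ d, LinearMap.mem_range_self _ d⟩ := Subtype.ext hd.symm
    rw [h3, hT₀ d]
    rfl
  -- commutation of v with N
  have hv0 : ∀ y ∈ Sᗮ, v y = 0 := by
    intro y hy
    have h0 : P y = 0 := Submodule.orthogonalProjectionOnto_apply_of_mem_orthogonal (K := S) hy
    rw [hv, h0, map_zero]
  have hcommv : ∀ (c : H →L[ℂ] H), c ∈ N → c * v = v * c := by
    intro c hc
    ext x
    have hperp : x - ↑(P x) ∈ Sᗮ := Submodule.sub_starProjection_mem_orthogonal (K := S) x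
    have e1 : v (c x) = c (T (P x)) := by
      have hx2 : c x = c ↑(P x) + c (x - ↑(P x)) := by
        rw [← map_add]
        congr 1
        abel
      rw [hx2, map_add]
      have e2 : v (c (x - ↑(P x))) = 0 := hv0 _ (hSperp c hc _ hperp)
      have e3 : v (c ↑(P x)) = T ⟨c ↑(P x), hSc c hc _ (P x).2⟩ :=
        hvs ⟨c ↑(P x), hSc c hc _ (P x).2⟩
      rw [e2, e3, add_zero, hTc c hc (P x)]
    show c (v x) = v (c x)
    rw [e1]
    rfl
  -- partial isometry
  have hadj : ∀ x : H, (adjoint v) (v x) = ↑(P x) := by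
    intro x
    refine ext_inner_right ℂ fun y => ?_
    rw [adjoint_inner_left]
    have h1 : ⟪v x, v y⟫_ℂ = ⟪(↑(P x):H), (↑(P y):H)⟫_ℂ := hTinner (P x) (P y)
    rw [h1, ← Submodule.coe_inner, Submodule.inner_orthogonalProjectionOnto_eq_of_mem_left]
  have hiso : v * (ContinuousLinearMap.adjoint v) * v = v := by
    ext x
    show v ((adjoint v) (v x)) = v x
    rw [hadj x, hvs (P x)]
    rfl
  exact ⟨v, VonNeumannAlgebra.mem_commutant_iff.mpr (fun g hg => hcommv g hg), hiso, hvΨ⟩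

/-- Under the Uhlmann property, two purifications of the same state on `M_A` are
related by a partial isometry in `M_B`. -/
theorem uhlmann_partialIsometry {H : Type*} [NormedAddCommGroup H]
    [InnerProductSpace ℂ H] [CompleteSpace H]
    (M_A M_B : VonNeumannAlgebra H)
    (hcomm : ∀ a ∈ M_A, ∀ b ∈ M_B, a * b = b * a)
    (huhlmann : UhlmannProperty M_A M_B)
    (Ψ Φ : H) (hmarg : ∀ a ∈ M_A, ⟪Ψ, a Ψ⟫_ℂ = ⟪Φ, a Φ⟫_ℂ) :
    ∃ v ∈ M_B, v * (ContinuousLinearMap.adjoint v) * v = v ∧ v Ψ = Φ := by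
  have hN := state_eq_commutant M_A M_B huhlmann Ψ Φ hmarg
  obtain ⟨v, hv, hiso, hvΨ⟩ := exists_pi_of_state_eq M_B.commutant Ψ Φ hN
  rw [VonNeumannAlgebra.commutant_commutant] at hv
  exact ⟨v, hv, hiso, hvΨ⟩
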